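/- Let h : ℝ^d → ℝ be three times continuously differentiable on an open convex set U, and suppose the operator norm of the third iterated Fréchet derivative of h is bounded by M on U. Then for all x_a, x_b ∈ U and all α ∈ [0,1], writing x_c := (1−α)·x_a + α·x_b and v := x_a − x_b, one has |h(x_c) − (1−α)·h(x_a) − α·h(x_b) + (α(1−α)/2)·D²_v h(x_c)| ≤ (M/6)·‖v‖³. -/

import Mathlib

open Set

lemma key_taylor (d : ℕ) (U : Set (EuclideanSpace ℝ (Fin d))) (hU : IsOpen U)
    (hUc : Convex ℝ U) (h : EuclideanSpace ℝ (Fin d) → ℝ) (hh : ContDiffOn ℝ 3 h U)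
    (M : ℝ) (hM : ∀ x ∈ U, ‖iteratedFDerivWithin ℝ 3 h U x‖ ≤ M)
    (c w : EuclideanSpace ℝ (Fin d)) (hc : c ∈ U) (hcw : c + w ∈ U) :
    |h (c + w) - h c - iteratedFDerivWithin ℝ 1 h U c (fun _ => w)
        - (1/2) * iteratedFDerivWithin ℝ 2 h U c (fun _ => w)| ≤ M * ‖w‖ ^ 3 / 2 := by
  set φ : ℝ → EuclideanSpace ℝ (Fin d) := fun t => c + t • w with hφ
  have hφmem : ∀ t ∈ Icc (0:ℝ) 1, φ t ∈ U := fun t ht => hUc.add_smul_mem hc hcw ht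
  set s : Set ℝ := Icc (0:ℝ) 1
  have hs : UniqueDiffOn ℝ s := uniqueDiffOn_Icc zero_lt_one
  have hφc : ContDiff ℝ 3 φ := by
    apply ContDiff.add contDiff_const
    exact (contDiff_id.smul contDiff_const)
  set g : ℝ → ℝ := fun t => h (φ t) with hg
  have hgC : ContDiffOn ℝ 3 g s :=
    hh.comp hφc.contDiffOn (fun t ht => hφmem t ht)
  -- derivative machinery
  have hφd : ∀ t : ℝ, HasDerivAt φ w t := by
    intro t
    simpa [φ] using ((hasDerivAt_id t).smul_const w).const_add c
  have hUd : UniqueDiffOn ℝ U := hU.uniqueDiffOn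
  have step : ∀ k : ℕ, (k : WithTop ℕ∞) < 3 → ∀ t ∈ s,
      HasDerivWithinAt (fun u => iteratedFDerivWithin ℝ k h U (φ u) (fun _ => w))
        (iteratedFDerivWithin ℝ (k+1) h U (φ t) (fun _ => w)) s t := by
    intro k hk t ht
    have hdiff : DifferentiableOn ℝ (iteratedFDerivWithin ℝ k h U) U :=
      hh.differentiableOn_iteratedFDerivWithin hk hUd
    have h1 : HasFDerivWithinAt (iteratedFDerivWithin ℝ k h U)
        (fderivWithin ℝ (iteratedFDerivWithin ℝ k h U) U (φ t)) U (φ t) :=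
      (hdiff (φ t) (hφmem t ht)).hasFDerivWithinAt
    have h2 : HasDerivWithinAt (fun u => iteratedFDerivWithin ℝ k h U (φ u))
        ((fderivWithin ℝ (iteratedFDerivWithin ℝ k h U) U (φ t)) w) s t :=
      h1.comp_hasDerivWithinAt t ((hφd t).hasDerivWithinAt) (fun u hu => hφmem u hu)
    have h3 := (ContinuousMultilinearMap.apply ℝ (fun _ : Fin k => EuclideanSpace ℝ (Fin d)) ℝ
        (fun _ => w)).hasFDerivAt.comp_hasDerivWithinAt t h2
    convert h3 using 1
    · rfl
    · rfl
    · rfl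
    · rw [iteratedFDerivWithin_succ_apply_left]
      rfl


  have e : ∀ k : ℕ, k ≤ 3 → ∀ t ∈ s,
      iteratedDerivWithin k g s t = iteratedFDerivWithin ℝ k h U (φ t) (fun _ => w) := by
    intro k hk
    induction k with
    | zero =>
      intro t ht
      simp [g, iteratedFDerivWithin_zero_apply]
    | succ n ih =>
      intro t ht
      have hn3 : n ≤ 3 := by omega
      rw [iteratedDerivWithin_succ,
        derivWithin_congr (fun u hu => ih hn3 u hu) (ih hn3 t ht)]
      have hlt : (n : WithTop ℕ∞) < 3 := by exact_mod_cast Nat.lt_of_succ_le hk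
      exact (step n hlt t ht).derivWithin (hs t ht)
  have hbound : ∀ y ∈ s, ‖iteratedDerivWithin 3 g s y‖ ≤ M * ‖w‖ ^ 3 := by
    intro y hy
    rw [e 3 le_rfl y hy]
    calc ‖iteratedFDerivWithin ℝ 3 h U (φ y) (fun _ => w)‖
        ≤ ‖iteratedFDerivWithin ℝ 3 h U (φ y)‖ * ∏ _i : Fin 3, ‖w‖ :=
          (iteratedFDerivWithin ℝ 3 h U (φ y)).le_opNorm _
      _ = ‖iteratedFDerivWithin ℝ 3 h U (φ y)‖ * ‖w‖ ^ 3 := by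
          rw [Finset.prod_const, Finset.card_univ, Fintype.card_fin]
      _ ≤ M * ‖w‖ ^ 3 := by
          gcongr
          exact hM _ (hφmem y hy)
  have htay := taylor_mean_remainder_bound (f := g) (a := 0) (b := 1) (n := 2)
    zero_le_one hgC (Set.right_mem_Icc.mpr zero_le_one) hbound
  rw [taylor_within_apply] at htay
  simp only [Finset.sum_range_succ, Finset.sum_range_zero] at htay
  have h0 : (0:ℝ) ∈ s := Set.left_mem_Icc.mpr zero_le_one
  have e0 := e 0 (by norm_num) 0 h0
  have e1 := e 1 (by norm_num) 0 h0
  have e2 := e 2 (by norm_num) 0 h0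
  have hφ0 : φ 0 = c := by simp [φ]
  have hφ1 : φ 1 = c + w := by simp [φ]
  rw [e0, e1, e2, hφ0] at htay
  have hg1 : g 1 = h (c + w) := by rw [hg]; simp [hφ1]
  rw [hg1] at htay
  simp only [iteratedFDerivWithin_zero_apply] at htay
  rw [Real.norm_eq_abs] at htay
  norm_num [Nat.factorial] at htay
  calc |h (c + w) - h c - iteratedFDerivWithin ℝ 1 h U c (fun _ => w)
        - (1/2) * iteratedFDerivWithin ℝ 2 h U c (fun _ => w)|
      = |h (c + w) - (h c + iteratedFDerivWithin ℝ 1 h U c (fun _ => w)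
        + 2⁻¹ * iteratedFDerivWithin ℝ 2 h U c (fun _ => w))| := by ring_nf
    _ ≤ M * ‖w‖ ^ 3 / 2 := by
        convert htay using 2 <;> ring


set_option maxHeartbeats 1000000 in
/-- Explicit-constant version of Proposition 1: if `h` is `C³` on an open convex set `U`
with third derivative bounded in operator norm by `M`, then the local linear approximation
error plus `(α(1-α)/2)·D²_v h(x_c)` is bounded by `(M/6)‖v‖³`, with `v = x_a - x_b`. -/
theorem stmt3 (d : ℕ) (U : Set (EuclideanSpace ℝ (Fin d))) (hU : IsOpen U)
    (hUc : Convex ℝ U) (h : EuclideanSpace ℝ (Fin d) → ℝ) (hh : ContDiffOn ℝ 3 h U)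
    (M : ℝ) (hM : ∀ x ∈ U, ‖iteratedFDerivWithin ℝ 3 h U x‖ ≤ M) :
    ∀ xa ∈ U, ∀ xb ∈ U, ∀ α ∈ Set.Icc (0 : ℝ) 1,
      |h ((1 - α) • xa + α • xb) - (1 - α) * h xa - α * h xb
          + (α * (1 - α) / 2) *
              iteratedFDerivWithin ℝ 2 h U ((1 - α) • xa + α • xb) ![xa - xb, xa - xb]|
        ≤ M / 6 * ‖xa - xb‖ ^ 3 := by
  intro xa hxa xb hxb α hα
  obtain ⟨hα0, hα1⟩ := hα
  set v : EuclideanSpace ℝ (Fin d) := xa - xb with hv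
  set c : EuclideanSpace ℝ (Fin d) := (1 - α) • xa + α • xb with hc
  have hcU : c ∈ U := hUc hxa hxb (by linarith) hα0 (by ring)
  have hca : c + α • v = xa := by
    rw [hc, hv]; module
  have hcb : c + (α - 1) • v = xb := by
    rw [hc, hv]; module
  have k1 := key_taylor d U hU hUc h hh M hM c (α • v) hcU (by rw [hca]; exact hxa)
  have k2 := key_taylor d U hU hUc h hh M hM c ((α - 1) • v) hcU (by rw [hcb]; exact hxb)
  rw [hca] at k1
  rw [hcb] at k2
  set A : ℝ := iteratedFDerivWithin ℝ 1 h U c (fun _ => v) with hA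
  set B : ℝ := iteratedFDerivWithin ℝ 2 h U c (fun _ => v) with hB
  have m1a : iteratedFDerivWithin ℝ 1 h U c (fun _ => α • v) = α * A := by
    rw [hA]
    have := (iteratedFDerivWithin ℝ 1 h U c).map_smul_univ (fun _ : Fin 1 => α) (fun _ => v)
    simpa using this
  have m2a : iteratedFDerivWithin ℝ 2 h U c (fun _ => α • v) = α ^ 2 * B := by
    rw [hB]
    have := (iteratedFDerivWithin ℝ 2 h U c).map_smul_univ (fun _ : Fin 2 => α) (fun _ => v)
    simpa [sq] using this
  have m1b : iteratedFDerivWithin ℝ 1 h U c (fun _ => (α - 1) • v) = (α - 1) * A := by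
    rw [hA]
    have := (iteratedFDerivWithin ℝ 1 h U c).map_smul_univ (fun _ : Fin 1 => (α - 1)) (fun _ => v)
    simpa using this
  have m2b : iteratedFDerivWithin ℝ 2 h U c (fun _ => (α - 1) • v) = (α - 1) ^ 2 * B := by
    rw [hB]
    have := (iteratedFDerivWithin ℝ 2 h U c).map_smul_univ (fun _ : Fin 2 => (α - 1)) (fun _ => v)
    simpa [sq] using this
  rw [m1a, m2a] at k1
  rw [m1b, m2b] at k2
  have hna : ‖α • v‖ ^ 3 = α ^ 3 * ‖v‖ ^ 3 := by
    rw [norm_smul, Real.norm_eq_abs, abs_of_nonneg hα0, mul_pow]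
  have hnb : ‖(α - 1) • v‖ ^ 3 = (1 - α) ^ 3 * ‖v‖ ^ 3 := by
    rw [norm_smul, Real.norm_eq_abs, abs_of_nonpos (by linarith), mul_pow]
    ring_nf
  rw [hna] at k1
  rw [hnb] at k2
  have hBm : iteratedFDerivWithin ℝ 2 h U c ![xa - xb, xa - xb] = B := by
    rw [hB]
    congr 1
    funext i
    fin_cases i <;> rfl
  rw [hBm]
  have hM0 : 0 ≤ M := le_trans (norm_nonneg _) (hM xa hxa)
  have hv0 : 0 ≤ ‖v‖ ^ 3 := by positivity
  rw [abs_le] at k1 k2 ⊢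
  obtain ⟨k1l, k1r⟩ := k1
  obtain ⟨k2l, k2r⟩ := k2
  constructor <;> nlinarith [mul_nonneg hM0 hv0, sq_nonneg (α * (1 - α)),
    mul_nonneg (mul_nonneg hM0 hv0) (mul_nonneg hα0 (by linarith : (0:ℝ) ≤ 1 - α)),
    sq_nonneg (α - 1/2)]
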